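/- If λ is a t-core partition of length at most tn, then the Frobenius rank of λ equals the sum over i from 0 to t-1 of max(n_i(λ) - n, 0), where n_i(λ) is the number of parts of β(λ, tn) congruent to i mod t. -/

import Mathlib

open Finset

/-- `l` is a partition of length at most `m`: antitone with all parts beyond `m` zero. -/
def PartLen (l : ℕ → ℕ) (m : ℕ) : Prop := Antitone l ∧ ∀ i, m ≤ i → l i = 0

/-- The beta-set `β(λ, m)` with parts `λ_i + m - i` (1-indexed), as a finset. -/
def betaSet (l : ℕ → ℕ) (m : ℕ) : Finset ℕ := (Finset.range m).image (fun i => l i + (m - 1 - i))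

/-- `n_i(λ)`: number of parts of the beta-set `β(λ, m)` congruent to `i` modulo `t`. -/
def nP (l : ℕ → ℕ) (m t : ℕ) (i : ℤ) : ℕ :=
  ((Finset.range m).filter
    (fun j => ((l j + (m - 1 - j) : ℕ) : ℤ) % (t : ℤ) = i % (t : ℤ))).card

/-- Macdonald's beta-set of the `t`-core of `λ`: the numbers `t*j + i` for `j < n_i(λ)`. -/
def coreBetaSet (l : ℕ → ℕ) (m t : ℕ) : Finset ℕ :=
  (Finset.range t).biUnion (fun i => (Finset.range (nP l m t i)).image (fun j => t * j + i))

/-- `λ` is a `t`-core iff its beta-set is already the beta-set of its `t`-core. -/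
def IsTCore (l : ℕ → ℕ) (m t : ℕ) : Prop := betaSet l m = coreBetaSet l m t

/-- The `t`-core of `λ` (with `m` beta-numbers), via Macdonald's construction. -/
def tCore (l : ℕ → ℕ) (m t : ℕ) : ℕ → ℕ := fun i =>
  if i < m then ((coreBetaSet l m t).sort (· ≤ ·)).getD (m - 1 - i) 0 - (m - 1 - i) else 0

/-- Part `j+1` of the conjugate partition of `l` (length at most `m`). -/
def conj (l : ℕ → ℕ) (m j : ℕ) : ℕ := ((Finset.range m).filter (fun i => j + 1 ≤ l i)).card

/-- The Frobenius rank: the number of `i` with `λ_i ≥ i` (1-indexed). -/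
def frobRank (l : ℕ → ℕ) (m : ℕ) : ℕ := ((Finset.range m).filter (fun i => i + 1 ≤ l i)).card

/-- First Frobenius coordinate `α_{j+1} = λ_{j+1} - (j+1)`. -/
def fA (l : ℕ → ℕ) (j : ℕ) : ℤ := (l j : ℤ) - (j + 1)

/-- Second Frobenius coordinate `β_{j+1} = λ'_{j+1} - (j+1)`. -/
def fB (l : ℕ → ℕ) (m j : ℕ) : ℤ := (conj l m j : ℤ) - (j + 1)

/-- `λ` is `(z₁, z₂, k)`-asymmetric: in Frobenius coordinates,
`λ = (α_1,…,α_r | α_1+z₁, …, (α_k+z₁ omitted), …, α_r+z₁, z₂)`; for `k = 0` no part is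
omitted and no part (`z₂`) is added. -/
def IsAsym (l : ℕ → ℕ) (m : ℕ) (z1 z2 : ℤ) (k : ℕ) : Prop :=
  k ≤ frobRank l m ∧
  (if k = 0 then ∀ j < frobRank l m, fB l m j = fA l j + z1
   else (∀ j : ℕ, j + 1 < k → fB l m j = fA l j + z1) ∧
        (∀ j : ℕ, k ≤ j + 1 → j + 2 ≤ frobRank l m → fB l m j = fA l (j + 1) + z1) ∧
        1 ≤ frobRank l m ∧ fB l m (frobRank l m - 1) = z2)

/-- rank of a `t`-core of length at most `tn`. -/
lemma piece_card (t n N i : ℕ) (ht : 1 ≤ t) (hi : i < t) :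
    (((Finset.range N).image (fun j => t * j + i)).filter (fun x => t * n ≤ x)).card = N - n := by
  rw [Finset.filter_image, Finset.card_image_of_injOn]
  · have he : (Finset.range N).filter (fun j => t * n ≤ t * j + i) = Finset.Ico n N := by
      ext j
      simp only [Finset.mem_filter, Finset.mem_range, Finset.mem_Ico]
      constructor
      · rintro ⟨hjN, hle⟩
        refine ⟨?_, hjN⟩
        by_contra h
        push_neg at h
        have h2 : t * j + i < t * (j + 1) := by rw [Nat.mul_succ]; omega
        have h3 : t * (j + 1) ≤ t * n := Nat.mul_le_mul_left t h
        omega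
      · rintro ⟨hnj, hjN⟩
        have h3 : t * n ≤ t * j := Nat.mul_le_mul_left t hnj
        exact ⟨hjN, by omega⟩
    rw [he, Nat.card_Ico]
  · intro a _ b _ hab
    have hab' : t * a + i = t * b + i := hab
    have : t * a = t * b := by omega
    exact Nat.eq_of_mul_eq_mul_left ht this

theorem frobRank_tcore_tn (t n : ℕ) (ht : 2 ≤ t) (hn : 1 ≤ n) (l : ℕ → ℕ)
    (hl : PartLen l (t * n)) (hcore : IsTCore l (t * n) t) :
    frobRank l (t * n) = ∑ i ∈ Finset.range t, (nP l (t * n) t i - n) := by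
  have hanti := hl.1
  have h1 : frobRank l (t * n) = ((betaSet l (t * n)).filter (fun x => t * n ≤ x)).card := by
    rw [betaSet, Finset.filter_image, Finset.card_image_of_injOn, frobRank]
    · congr 1
      apply Finset.filter_congr
      intro i hi
      simp only [Finset.mem_range] at hi
      show i + 1 ≤ l i ↔ t * n ≤ l i + (t * n - 1 - i)
      omega
    · intro a ha b hb hab
      simp only [Finset.coe_filter, Set.mem_setOf_eq, Finset.mem_range] at ha hb
      have hab' : l a + (t * n - 1 - a) = l b + (t * n - 1 - b) := hab
      rcases Nat.lt_trichotomy a b with h | h | h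
      · have h2 := hanti h.le
        omega
      · exact h
      · have h2 := hanti h.le
        omega
  rw [h1, hcore, coreBetaSet, Finset.filter_biUnion]
  rw [Finset.card_biUnion]
  · apply Finset.sum_congr rfl
    intro i hi
    simp only [Finset.mem_range] at hi
    exact piece_card t n _ i (by omega) hi
  · intro i hi i' hi' hne
    simp only [Finset.mem_coe, Finset.mem_range] at hi hi'
    rw [Function.onFun, Finset.disjoint_left]
    intro a ha ha'
    rw [Finset.mem_filter, Finset.mem_image] at ha ha'
    obtain ⟨⟨j, _, hj⟩, _⟩ := ha
    obtain ⟨⟨j', _, hj'⟩, _⟩ := ha'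
    apply hne
    have e1 : a % t = i := by rw [← hj, Nat.mul_add_mod, Nat.mod_eq_of_lt hi]
    have e2 : a % t = i' := by rw [← hj', Nat.mul_add_mod, Nat.mod_eq_of_lt hi']
    omega
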